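/- With R = K⟦f₁,…,f_s⟧ as in the context, for every f ∈ K⟦x⟧ there exist g ∈ R and r ∈ K⟦x⟧ such that: (i) f = g + r; (ii) if g ≠ 0 then o(g) ≥ o(f), and if r ≠ 0 then o(r) ≥ o(f); (iii) supp(r) ⊆ ℕ∖⟨o(f₁),…,o(f_s)⟩. -/

import Mathlib

set_option synthInstance.maxHeartbeats 1000000
set_option maxHeartbeats 1000000

open PowerSeries

/-- The order of a formal power series: the least `i` such that the coefficient of `x^i`
is nonzero (junk value `0` for the zero series). -/
noncomputable def ord (K : Type*) [Field K] (f : PowerSeries K) : ℕ :=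
  sInf {i | coeff i f ≠ 0}

/-- The set of orders of nonzero elements of a subalgebra `R ⊆ K⟦x⟧`. -/
def oSet (K : Type*) [Field K] (R : Subalgebra K (PowerSeries K)) : Set ℕ :=
  {n | ∃ f ∈ R, f ≠ 0 ∧ ord K f = n}

/-- The quotient `K⟦x⟧/R` has finite length as an `R`-module. -/
def FiniteLengthQuot (K : Type*) [Field K] (R : Subalgebra K (PowerSeries K)) : Prop :=
  IsFiniteLength R (PowerSeries K ⧸ LinearMap.range (Algebra.linearMap R (PowerSeries K)))

/-- The closure of a subalgebra of `K⟦x⟧` in the `x`-adic topology: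
`f` belongs to the closure of `S` iff for every `n` there is an element of `S`
agreeing with `f` on all coefficients up to `n`. -/
def adicClosure {K : Type*} [Field K] (S : Subalgebra K (PowerSeries K)) :
    Subalgebra K (PowerSeries K) where
  carrier := {f | ∀ n : ℕ, ∃ p ∈ S, ∀ i ≤ n, coeff i f = coeff i p}
  add_mem' := by
    intro f g hf hg n
    obtain ⟨p, hpS, hp⟩ := hf n
    obtain ⟨q, hqS, hq⟩ := hg n
    exact ⟨p + q, S.add_mem hpS hqS, fun i hi => by
      simp [map_add, hp i hi, hq i hi]⟩
  mul_mem' := by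
    intro f g hf hg n
    obtain ⟨p, hpS, hp⟩ := hf n
    obtain ⟨q, hqS, hq⟩ := hg n
    refine ⟨p * q, S.mul_mem hpS hqS, fun i hi => ?_⟩
    rw [coeff_mul, coeff_mul]
    refine Finset.sum_congr rfl fun ab hab => ?_
    have h : ab.1 + ab.2 = i := by simpa using hab
    rw [hp ab.1 (by omega), hq ab.2 (by omega)]
  algebraMap_mem' := fun r => fun n => ⟨algebraMap K _ r, S.algebraMap_mem r, fun i _ => rfl⟩

/-- `K⟦f₁,…,f_s⟧`, the subalgebra of `K⟦x⟧` consisting of all power series of the form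
`P(f₁,…,f_s)` with `P ∈ K⟦X₁,…,X_s⟧` (for `fᵢ` of positive order), realized as the
`x`-adic closure of the subalgebra generated by `f₁, …, f_s`; this closure coincides with
the image of the substitution homomorphism `K⟦X₁,…,X_s⟧ → K⟦x⟧`, `Xᵢ ↦ fᵢ`. -/
noncomputable def seriesAlgebra {K : Type*} [Field K] {s : ℕ} (f : Fin s → PowerSeries K) :
    Subalgebra K (PowerSeries K) :=
  adicClosure (Algebra.adjoin K (Set.range f))

lemma coeff_ord_ne {K : Type*} [Field K] {f : PowerSeries K} (hf : f ≠ 0) :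
    coeff (ord K f) f ≠ 0 := by
  have : {i | coeff i f ≠ 0}.Nonempty := by
    by_contra h
    rw [Set.not_nonempty_iff_eq_empty] at h
    refine hf (PowerSeries.ext fun n => ?_)
    have := Set.eq_empty_iff_forall_notMem.mp h n
    simpa using this
  exact Nat.sInf_mem this

lemma coeff_of_lt_ord' {K : Type*} [Field K] {f : PowerSeries K} {i : ℕ}
    (hi : i < ord K f) : coeff i f = 0 := by
  by_contra h
  exact Nat.notMem_of_lt_sInf hi h

lemma order_eq_ord {K : Type*} [Field K] {f : PowerSeries K} (hf : f ≠ 0) :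
    f.order = (ord K f : ℕ∞) := by
  rw [order_eq_nat]
  exact ⟨coeff_ord_ne hf, fun i hi => coeff_of_lt_ord' hi⟩

open scoped Classical in
noncomputable def remSeq {K : Type*} [Field K] (E : ℕ → PowerSeries K) (S : Set ℕ)
    (F : PowerSeries K) : ℕ → PowerSeries K
  | 0 => F
  | n+1 => remSeq E S F n -
      (if n ∈ S then (coeff n (remSeq E S F n) / coeff n (E n)) • E n else 0)

/-- Division with remainder in `R = K⟦f₁,…,f_s⟧`: every `f ∈ K⟦x⟧` can be written as
`f = g + r` with `g ∈ R`, `o(g) ≥ o(f)` and `o(r) ≥ o(f)` (when nonzero), and the support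
of `r` contained in `ℕ ∖ ⟨o(f₁),…,o(f_s)⟩`. -/
theorem stmt_4 (K : Type*) [Field K] {s : ℕ} (f : Fin s → PowerSeries K)
    (hf0 : ∀ i, f i ≠ 0) (hford : ∀ i, 0 < ord K (f i))
    (hlen : FiniteLengthQuot K (seriesAlgebra f)) (F : PowerSeries K) :
    ∃ g ∈ seriesAlgebra f, ∃ r : PowerSeries K,
      F = g + r ∧
      (g ≠ 0 → ord K F ≤ ord K g) ∧
      (r ≠ 0 → ord K F ≤ ord K r) ∧
      (∀ i : ℕ, coeff i r ≠ 0 →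
        i ∉ AddSubmonoid.closure (Set.range fun j => ord K (f j))) := by
  classical
  set Sc := AddSubmonoid.closure (Set.range fun j => ord K (f j)) with hScdef
  have hE : ∀ n, n ∈ Sc → ∃ e ∈ Algebra.adjoin K (Set.range f), e.order = (n : ℕ∞) := by
    intro n hn
    induction hn using AddSubmonoid.closure_induction with
    | mem x hx =>
      obtain ⟨j, rfl⟩ := hx
      exact ⟨f j, Algebra.subset_adjoin ⟨j, rfl⟩, order_eq_ord (hf0 j)⟩
    | zero => exact ⟨1, one_mem _, by simp [order_one]⟩
    | add x y hx hy ihx ihy =>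
      obtain ⟨a, ha, hoa⟩ := ihx
      obtain ⟨b, hb, hob⟩ := ihy
      exact ⟨a * b, mul_mem ha hb, by rw [order_mul, hoa, hob]; push_cast; ring⟩
  set E : ℕ → PowerSeries K := fun n => if h : n ∈ Sc then (hE n h).choose else 1 with hEdef
  have hEmem : ∀ n, n ∈ Sc → E n ∈ Algebra.adjoin K (Set.range f) := by
    intro n h
    simp only [hEdef, dif_pos h]
    exact (hE n h).choose_spec.1
  have hEord : ∀ n, n ∈ Sc → (E n).order = (n : ℕ∞) := by
    intro n h
    simp only [hEdef, dif_pos h]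
    exact (hE n h).choose_spec.2
  set R : ℕ → PowerSeries K := remSeq E (Sc : Set ℕ) F with hRdef
  have hR0 : R 0 = F := rfl
  have hRstep : ∀ n, R (n+1) = R n -
      (if n ∈ Sc then (coeff n (R n) / coeff n (E n)) • E n else 0) := by
    intro n
    rw [hRdef]
    rw [remSeq]
    congr 1
  have hcorr : ∀ n i, i < n → coeff i (R (n+1)) = coeff i (R n) := by
    intro n i hi
    rw [hRstep, map_sub]
    split_ifs with h
    · rw [map_smul, coeff_of_lt_order (φ := E n) i (by rw [hEord n h]; exact_mod_cast hi)]
      simp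
    · simp
  have hstab : ∀ i m, i < m → coeff i (R m) = coeff i (R (i+1)) := by
    intro i m
    induction m with
    | zero => omega
    | succ m ih =>
      intro hm
      rcases Nat.lt_or_ge i m with h | h
      · rw [hcorr m i h, ih h]
      · have : i = m := by omega
        subst this
        rfl
  have hlow : ∀ n, n ≤ ord K F → R n = F := by
    intro n
    induction n with
    | zero => intro _; rfl
    | succ n ih =>
      intro hn
      rw [hRstep, ih (by omega)]
      have h0 : coeff n F = 0 := coeff_of_lt_ord' (by omega)
      split_ifs with h
      · rw [h0]
        simp
      · simp
  have hFlow : ∀ n i, i < ord K F → coeff i (R n) = coeff i F := by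
    intro n i hi
    have h1 : R (i+1) = F := hlow (i+1) hi
    rcases le_or_gt n (i+1) with h | h
    · rw [hlow n (le_trans h hi)]
    · rw [hstab i n (by omega), h1]
  set r : PowerSeries K := PowerSeries.mk (fun i => coeff i (R (i+1))) with hrdef
  have hrc : ∀ i, coeff i r = coeff i (R (i+1)) := by
    intro i
    rw [hrdef, coeff_mk]
  set g : PowerSeries K := F - r with hgdef
  have hmem : ∀ n, F - R n ∈ Algebra.adjoin K (Set.range f) := by
    intro n
    induction n with
    | zero => simpa [hR0] using (zero_mem (Algebra.adjoin K (Set.range f)))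
    | succ n ih =>
      have heq : F - R (n+1) = (F - R n) +
          (if n ∈ Sc then (coeff n (R n) / coeff n (E n)) • E n else 0) := by
        rw [hRstep]
        ring
      rw [heq]
      refine add_mem ih ?_
      split_ifs with h
      · exact Subalgebra.smul_mem _ (hEmem n h) _
      · exact zero_mem _
  have hginR : g ∈ seriesAlgebra f := by
    intro n
    refine ⟨F - R (n+1), hmem (n+1), fun i hi => ?_⟩
    rw [hgdef, map_sub, map_sub, hrc, ← hstab i (n+1) (by omega)]
  have hrlow : ∀ i, i < ord K F → coeff i r = 0 := by
    intro i hi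
    rw [hrc, hFlow (i+1) i hi]
    exact coeff_of_lt_ord' hi
  have hglow : ∀ i, i < ord K F → coeff i g = 0 := by
    intro i hi
    rw [hgdef, map_sub, hrlow i hi, coeff_of_lt_ord' hi, sub_zero]
  refine ⟨g, hginR, r, by rw [hgdef]; ring, ?_, ?_, ?_⟩
  · intro hg
    by_contra hlt
    push_neg at hlt
    exact coeff_ord_ne hg (hglow _ hlt)
  · intro hr
    by_contra hlt
    push_neg at hlt
    exact coeff_ord_ne hr (hrlow _ hlt)
  · intro i hne hiS
    apply hne
    rw [hrc, hRstep, if_pos hiS, map_sub, map_smul, smul_eq_mul]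
    have hEne : coeff i (E i) ≠ 0 := (order_eq_nat.mp (hEord i hiS)).1
    rw [div_mul_cancel₀ _ hEne, sub_self]
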